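/- The set X of colorful configurations f : Δ → R^d such that 0 ∈ aff f(ρ_1) ∩ aff f(ρ_2) for two distinct colorful (d-1)-simplices ρ_1, ρ_2 is contained in a finite union of sets of dimension at most d(n_0 + ... + n_d) − 2 in the space R^{d·|Δ|} of all configurations. -/

import Mathlib

open Finset

/-- The mod-2 simplicial boundary operator (with augmentation) on the space of all
`ZMod 2`-valued functions on finite vertex subsets. -/
noncomputable def bdry {V : Type*} [Fintype V] [DecidableEq V] :
    (Finset V → ZMod 2) →ₗ[ZMod 2] (Finset V → ZMod 2) where
  toFun c := fun τ => ∑ v ∈ Finset.univ \ τ, c (insert v τ)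
  map_add' x y := by funext τ; simp [Finset.sum_add_distrib]
  map_smul' m x := by funext τ; simp [Finset.mul_sum, mul_sub]

/-- `k`-chains of the complex `K`: functions supported on faces of `K` with `k + 1`
vertices. -/
def chainsOf {V : Type*} [Fintype V] [DecidableEq V] (K : Finset V → Prop) (k : ℕ) :
    Submodule (ZMod 2) (Finset V → ZMod 2) where
  carrier := {c | ∀ σ, c σ ≠ 0 → K σ ∧ σ.card = k + 1}
  add_mem' := by
    intro a b ha hb σ h
    by_cases h1 : a σ = 0
    · exact hb σ (by simpa [h1] using h)
    · exact ha σ h1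
  zero_mem' := by intro σ h; simp at h
  smul_mem' := by
    intro m x hx σ h
    exact hx σ (by intro h0; exact h (by simp [h0]))

/-- Reduced `k`-cycles of `K` (the boundary operator includes the augmentation,
so this computes *reduced* homology). -/
noncomputable def cyclesOf {V : Type*} [Fintype V] [DecidableEq V]
    (K : Finset V → Prop) (k : ℕ) : Submodule (ZMod 2) (Finset V → ZMod 2) :=
  chainsOf K k ⊓ LinearMap.ker bdry

/-- `k`-boundaries of `K`. -/
noncomputable def boundariesOf {V : Type*} [Fintype V] [DecidableEq V]
    (K : Finset V → Prop) (k : ℕ) : Submodule (ZMod 2) (Finset V → ZMod 2) :=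
  Submodule.map bdry (chainsOf K (k + 1))

/-- The `k`-th reduced Betti number of `K` over `ZMod 2`: the dimension of reduced
cycles modulo boundaries. -/
noncomputable def bettiOf {V : Type*} [Fintype V] [DecidableEq V]
    (K : Finset V → Prop) (k : ℕ) : ℕ :=
  Module.finrank (ZMod 2)
    (↥(cyclesOf K k) ⧸ Submodule.comap (cyclesOf K k).subtype (boundariesOf K k))

/-- Faces of the colorful complex `Rain(n)`: at most one vertex of each color. -/
def IsColorful {d : ℕ} {n : Fin (d + 1) → ℕ}
    (σ : Finset ((i : Fin (d + 1)) × Fin (n i))) : Prop :=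
  ∀ v ∈ σ, ∀ w ∈ σ, v.1 = w.1 → v = w

section Aux

open Module Set

variable {V : Type*} [Fintype V] [DecidableEq V]
variable {E : Type*} [NormedAddCommGroup E] [NormedSpace ℝ E]

/-- Extend a function on a finset by zero. -/
def extZero (s : Finset V) (g : ↥s → E) : V → E := fun v => if h : v ∈ s then g ⟨v, h⟩ else 0

/-- Parametrization map for the case of two solved vertices. -/
def mapA (σ₁ σ₂ : Finset V) (j₁ j₂ : V)
    (x : (↥(({j₁, j₂}ᶜ : Finset V)) → E) × (↥(σ₁.erase j₁) → ℝ) × (↥(σ₂.erase j₂) → ℝ)) :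
    V → E :=
  fun v =>
    if v = j₁ then
      -∑ i : ↥(σ₁.erase j₁), x.2.1 i •
        (if (i : V) = j₂ then
            -∑ k : ↥(σ₂.erase j₂), x.2.2 k • extZero ({j₁, j₂}ᶜ) x.1 (k : V)
          else extZero ({j₁, j₂}ᶜ) x.1 (i : V))
    else if v = j₂ then -∑ k : ↥(σ₂.erase j₂), x.2.2 k • extZero ({j₁, j₂}ᶜ) x.1 (k : V)
    else extZero ({j₁, j₂}ᶜ) x.1 v

/-- Parametrization map for the case of one solved vertex with few coefficients. -/
def mapB (S : Finset V) (j : V)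
    (x : (↥(({j}ᶜ : Finset V)) → E) × (↥(S.erase j) → ℝ)) : V → E :=
  fun v =>
    if v = j then -∑ i : ↥(S.erase j), x.2 i • extZero ({j}ᶜ) x.1 (i : V)
    else extZero ({j}ᶜ) x.1 v

lemma extZero_contDiff {D : Type*} [NormedAddCommGroup D] [NormedSpace ℝ D]
    (s : Finset V) (L : D → (↥s → E)) (hL : ContDiff ℝ 1 L) (v : V) :
    ContDiff ℝ 1 (fun x => extZero s (L x) v) := by
  by_cases h : v ∈ s
  · simp only [extZero, dif_pos h]
    exact (contDiff_pi.1 hL ⟨v, h⟩)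
  · simp only [extZero, dif_neg h]
    exact contDiff_const

lemma mapA_contDiff (σ₁ σ₂ : Finset V) (j₁ j₂ : V) :
    ContDiff ℝ 1 (mapA (E := E) σ₁ σ₂ j₁ j₂) := by
  have hg : ∀ w : V, ContDiff ℝ 1
      (fun x : (↥(({j₁, j₂}ᶜ : Finset V)) → E) × (↥(σ₁.erase j₁) → ℝ) ×
          (↥(σ₂.erase j₂) → ℝ) => extZero ({j₁, j₂}ᶜ) x.1 w) :=
    fun w => extZero_contDiff _ _ contDiff_fst w
  have hQ : ContDiff ℝ 1
      (fun x : (↥(({j₁, j₂}ᶜ : Finset V)) → E) × (↥(σ₁.erase j₁) → ℝ) ×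
          (↥(σ₂.erase j₂) → ℝ) =>
        -∑ k : ↥(σ₂.erase j₂), x.2.2 k • extZero ({j₁, j₂}ᶜ) x.1 (k : V)) := by
    apply ContDiff.neg
    apply ContDiff.sum
    intro k _
    exact ContDiff.smul (by fun_prop) (hg _)
  rw [contDiff_pi]
  intro v
  simp only [mapA]
  by_cases h1 : v = j₁
  · simp only [if_pos h1]
    apply ContDiff.neg
    apply ContDiff.sum
    intro i _
    by_cases h2 : (i : V) = j₂
    · simp only [if_pos h2]
      exact ContDiff.smul (by fun_prop) hQ
    · simp only [if_neg h2]
      exact ContDiff.smul (by fun_prop) (hg _)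
  · by_cases h2 : v = j₂
    · simp only [if_neg h1, if_pos h2]
      exact hQ
    · simp only [if_neg h1, if_neg h2]
      exact hg v

lemma mapB_contDiff (S : Finset V) (j : V) :
    ContDiff ℝ 1 (mapB (E := E) S j) := by
  have hg : ∀ w : V, ContDiff ℝ 1
      (fun x : (↥(({j}ᶜ : Finset V)) → E) × (↥(S.erase j) → ℝ) =>
        extZero ({j}ᶜ) x.1 w) :=
    fun w => extZero_contDiff _ _ contDiff_fst w
  rw [contDiff_pi]
  intro v
  simp only [mapB]
  by_cases h1 : v = j
  · simp only [if_pos h1]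
    apply ContDiff.neg
    apply ContDiff.sum
    intro i _
    exact ContDiff.smul (by fun_prop) (hg _)
  · simp only [if_neg h1]
    exact hg v

lemma exists_weights (f : V → E) (ρ : Finset V) (h : (0 : E) ∈ affineSpan ℝ (f '' ↑ρ)) :
    ∃ W : V → ℝ, (∀ v, v ∉ ρ → W v = 0) ∧ (∑ v ∈ ρ, W v) = 1 ∧ (∑ v ∈ ρ, W v • f v) = 0 := by
  have himg : f '' ↑ρ = Set.range (fun i : ↥ρ => f ↑i) := by
    ext y
    constructor
    · rintro ⟨x, hx, rfl⟩
      exact ⟨⟨x, hx⟩, rfl⟩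
    · rintro ⟨⟨x, hx⟩, rfl⟩
      exact ⟨x, hx, rfl⟩
  rw [himg] at h
  obtain ⟨s, w, hw, h0⟩ := eq_affineCombination_of_mem_affineSpan h
  rw [Finset.affineCombination_eq_linear_combination _ _ _ hw] at h0
  classical
  refine ⟨fun v => if hv : v ∈ ρ then (if (⟨v, hv⟩ : ↥ρ) ∈ s then w ⟨v, hv⟩ else 0) else 0,
    fun v hv => dif_neg hv, ?_, ?_⟩
  · rw [← Finset.sum_attach ρ]
    have : ∀ i ∈ ρ.attach,
        (if hv : (i : V) ∈ ρ then (if (⟨(i : V), hv⟩ : ↥ρ) ∈ s then w ⟨(i : V), hv⟩ else 0) else 0)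
          = if i ∈ s then w i else 0 := by
      intro i _
      rw [dif_pos i.2]
    rw [Finset.sum_congr rfl this, Finset.sum_ite_mem,
      Finset.inter_eq_right.mpr (fun i _ => Finset.mem_attach _ _), hw]
  · rw [← Finset.sum_attach ρ]
    have : ∀ i ∈ ρ.attach,
        (if hv : (i : V) ∈ ρ then (if (⟨(i : V), hv⟩ : ↥ρ) ∈ s then w ⟨(i : V), hv⟩ else 0) else 0)
            • f (i : V)
          = if i ∈ s then w i • f (i : V) else 0 := by
      intro i _
      rw [dif_pos i.2]
      simp only [Subtype.eta]
      split_ifs <;> simp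
    rw [Finset.sum_congr rfl this, Finset.sum_ite_mem,
      Finset.inter_eq_right.mpr (fun i _ => Finset.mem_attach _ _), ← h0]

lemma solve_eq {σ : Finset V} {j : V} {W : V → ℝ} {f : V → E} (hj : j ∈ σ) (hW : W j ≠ 0)
    (h0 : (∑ v ∈ σ, W v • f v) = 0) :
    -∑ i : ↥(σ.erase j), (W ↑i / W j) • f ↑i = f j := by
  have h1 : (∑ v ∈ σ.erase j, W v • f v) = -(W j • f j) := by
    have h2 := Finset.add_sum_erase σ (fun v => W v • f v) hj
    rw [h0] at h2
    linear_combination (norm := module) h2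
  calc -∑ i : ↥(σ.erase j), (W ↑i / W j) • f ↑i
      = -∑ v ∈ σ.erase j, (W v / W j) • f v := by
        rw [Finset.univ_eq_attach]
        exact congrArg Neg.neg (Finset.sum_attach _ fun v => (W v / W j) • f v)
    _ = -((W j)⁻¹ • ∑ v ∈ σ.erase j, W v • f v) := by
        rw [Finset.smul_sum]
        congr 1
        refine Finset.sum_congr rfl fun v _ => ?_
        rw [smul_smul, div_eq_inv_mul]
    _ = f j := by rw [h1, smul_neg, neg_neg, smul_smul, inv_mul_cancel₀ hW, one_smul]

end Aux

section Aux2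

open Module

variable {V : Type*} [Fintype V] [DecidableEq V]
variable {E : Type*} [NormedAddCommGroup E] [NormedSpace ℝ E] [FiniteDimensional ℝ E]

lemma finrank_domA (σ₁ σ₂ : Finset V) (j₁ j₂ : V) :
    finrank ℝ ((↥(({j₁, j₂}ᶜ : Finset V)) → E) × (↥(σ₁.erase j₁) → ℝ) ×
        (↥(σ₂.erase j₂) → ℝ))
      = ({j₁, j₂}ᶜ : Finset V).card * finrank ℝ E
          + ((σ₁.erase j₁).card + (σ₂.erase j₂).card) := by
  rw [Module.finrank_prod, Module.finrank_prod, Module.finrank_pi, Module.finrank_pi,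
    Module.finrank_pi_fintype, Finset.sum_const, Finset.card_univ, smul_eq_mul,
    Fintype.card_coe, Fintype.card_coe, Fintype.card_coe]

lemma finrank_domB (S : Finset V) (j : V) :
    finrank ℝ ((↥(({j}ᶜ : Finset V)) → E) × (↥(S.erase j) → ℝ))
      = ({j}ᶜ : Finset V).card * finrank ℝ E + (S.erase j).card := by
  rw [Module.finrank_prod, Module.finrank_pi, Module.finrank_pi_fintype, Finset.sum_const,
    Finset.card_univ, smul_eq_mul, Fintype.card_coe, Fintype.card_coe]

lemma nat_boundA {N d : ℕ} (hN : 2 ≤ N) (hd : 1 ≤ d) :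
    (N - 2) * d + ((d - 1) + (d - 1)) ≤ d * N - 2 := by
  obtain ⟨k, rfl⟩ := Nat.exists_eq_add_of_le hN
  have h0 : 2 + k - 2 = k := by omega
  have h1 : d * (2 + k) = 2 * d + k * d := by ring
  rw [h0, h1]
  generalize k * d = p
  omega

lemma nat_boundB {N d s : ℕ} (hN : 2 ≤ N) (hs : 1 ≤ s) (hsd : s < d) :
    (N - 1) * d + (s - 1) ≤ d * N - 2 := by
  obtain ⟨k, rfl⟩ := Nat.exists_eq_add_of_le hN
  have h0 : 2 + k - 1 = 1 + k := by omega
  have h1 : (1 + k) * d = d + k * d := by ring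
  have h2 : d * (2 + k) = 2 * d + k * d := by ring
  rw [h0, h1, h2]
  generalize k * d = p
  omega

end Aux2


/-- **Codimension-2 bound for degenerate configurations.** The set of configurations
for which the origin lies on the affine hulls of two distinct colorful
`(d-1)`-simplices simultaneously is contained in a finite union of sets of
(Hausdorff) dimension at most `d·(n 0 + ⋯ + n d) - 2`. -/
theorem degenerate_set_small (d : ℕ) (n : Fin (d + 1) → ℕ) (hn : ∀ i, 2 ≤ n i) :
    ∃ (ι : Type) (_ : Finite ι)
      (A : ι → Set (((i : Fin (d + 1)) × Fin (n i)) → EuclideanSpace ℝ (Fin d))),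
      {f : ((i : Fin (d + 1)) × Fin (n i)) → EuclideanSpace ℝ (Fin d) |
          ∃ ρ₁ ρ₂ : Finset ((i : Fin (d + 1)) × Fin (n i)),
            IsColorful ρ₁ ∧ IsColorful ρ₂ ∧ ρ₁.card = d ∧ ρ₂.card = d ∧ ρ₁ ≠ ρ₂ ∧
            (0 : EuclideanSpace ℝ (Fin d)) ∈ affineSpan ℝ (f '' ↑ρ₁) ∧
            (0 : EuclideanSpace ℝ (Fin d)) ∈ affineSpan ℝ (f '' ↑ρ₂)}
        ⊆ (⋃ i, A i) ∧
      (∀ i, dimH (A i) ≤ (d * (∑ i, n i) - 2 : ℕ)) := by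
  classical
  have hN : 2 ≤ ∑ i, n i :=
    le_trans (hn 0) (Finset.single_le_sum (f := n) (fun i _ => Nat.zero_le _) (Finset.mem_univ 0))
  have hcardV : Fintype.card ((i : Fin (d + 1)) × Fin (n i)) = ∑ i, n i := by
    simp [Fintype.card_sigma]
  refine ⟨(Finset ((i : Fin (d + 1)) × Fin (n i)) × Finset ((i : Fin (d + 1)) × Fin (n i)) ×
        ((i : Fin (d + 1)) × Fin (n i)) × ((i : Fin (d + 1)) × Fin (n i)))
      ⊕ (Finset ((i : Fin (d + 1)) × Fin (n i)) × ((i : Fin (d + 1)) × Fin (n i))),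
    inferInstance,
    Sum.elim
      (fun p => if p.2.2.1 ∈ p.1 ∧ p.2.2.2 ∈ p.2.1 ∧ p.2.2.1 ∉ p.2.1 ∧ p.2.2.1 ≠ p.2.2.2 ∧
          p.1.card = d ∧ p.2.1.card = d
        then Set.range (mapA (E := EuclideanSpace ℝ (Fin d)) p.1 p.2.1 p.2.2.1 p.2.2.2) else ∅)
      (fun p => if p.2 ∈ p.1 ∧ p.1.card < d
        then Set.range (mapB (E := EuclideanSpace ℝ (Fin d)) p.1 p.2) else ∅),
    ?_, ?_⟩
  · rintro f ⟨ρ₁, ρ₂, _, _, hc1, hc2, hρne, h1, h2⟩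
    obtain ⟨W₁, hW₁0, hW₁1, hW₁s⟩ := exists_weights f ρ₁ h1
    obtain ⟨W₂, hW₂0, hW₂1, hW₂s⟩ := exists_weights f ρ₂ h2
    by_cases hA : ∃ j₁ ∈ ρ₁, W₁ j₁ ≠ 0 ∧ j₁ ∉ ρ₂
    · obtain ⟨j₁, hj₁ρ, hj₁W, hj₁n⟩ := hA
      obtain ⟨j₂, hj₂ρ, hj₂W⟩ := Finset.exists_ne_zero_of_sum_ne_zero
        (show (∑ v ∈ ρ₂, W₂ v) ≠ 0 by rw [hW₂1]; exact one_ne_zero)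
      have hne12 : j₁ ≠ j₂ := fun h => hj₁n (h ▸ hj₂ρ)
      refine Set.mem_iUnion.2 ⟨Sum.inl (ρ₁, ρ₂, j₁, j₂), ?_⟩
      rw [Sum.elim_inl, if_pos ⟨hj₁ρ, hj₂ρ, hj₁n, hne12, hc1, hc2⟩]
      refine ⟨⟨fun v => f ↑v, fun i => W₁ ↑i / W₁ j₁, fun i => W₂ ↑i / W₂ j₂⟩, ?_⟩
      have hgf : ∀ w : ((i : Fin (d + 1)) × Fin (n i)), w ≠ j₁ → w ≠ j₂ →
          extZero ({j₁, j₂}ᶜ) (fun v : ↥(({j₁, j₂}ᶜ : Finset ((i : Fin (d + 1)) × Fin (n i)))) =>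
            f ↑v) w = f w := by
        intro w hw1 hw2
        have hw : w ∈ ({j₁, j₂}ᶜ : Finset ((i : Fin (d + 1)) × Fin (n i))) := by
          simp [Finset.mem_compl, hw1, hw2]
        simp only [extZero, dif_pos hw]
      have hQ : (-∑ k : ↥(ρ₂.erase j₂), (W₂ ↑k / W₂ j₂) •
          extZero ({j₁, j₂}ᶜ) (fun v : ↥(({j₁, j₂}ᶜ :
            Finset ((i : Fin (d + 1)) × Fin (n i)))) => f ↑v) ↑k) = f j₂ := by
        have hs : (∑ k : ↥(ρ₂.erase j₂), (W₂ ↑k / W₂ j₂) •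
            extZero ({j₁, j₂}ᶜ) (fun v : ↥(({j₁, j₂}ᶜ :
              Finset ((i : Fin (d + 1)) × Fin (n i)))) => f ↑v) ↑k)
            = ∑ k : ↥(ρ₂.erase j₂), (W₂ ↑k / W₂ j₂) • f ↑k := by
          refine Finset.sum_congr rfl fun k _ => ?_
          have hk := Finset.mem_erase.1 k.2
          rw [hgf _ (fun h => hj₁n (h ▸ hk.2)) hk.1]
        rw [hs]
        exact solve_eq hj₂ρ hj₂W hW₂s
      funext v
      simp only [mapA]
      split_ifs with hv1 hv2
      · have hterm : ∀ i : ↥(ρ₁.erase j₁),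
            (if (↑i : ((i : Fin (d + 1)) × Fin (n i))) = j₂ then
                -∑ k : ↥(ρ₂.erase j₂), (W₂ ↑k / W₂ j₂) •
                  extZero ({j₁, j₂}ᶜ) (fun v : ↥(({j₁, j₂}ᶜ :
                    Finset ((i : Fin (d + 1)) × Fin (n i)))) => f ↑v) ↑k
              else extZero ({j₁, j₂}ᶜ) (fun v : ↥(({j₁, j₂}ᶜ :
                Finset ((i : Fin (d + 1)) × Fin (n i)))) => f ↑v) ↑i) = f ↑i := by
          intro i
          by_cases h : (↑i : ((i : Fin (d + 1)) × Fin (n i))) = j₂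
          · rw [if_pos h, hQ, h]
          · rw [if_neg h]
            exact hgf _ (Finset.mem_erase.1 i.2).1 h
        have hs : (∑ i : ↥(ρ₁.erase j₁), (W₁ ↑i / W₁ j₁) •
            (if (↑i : ((i : Fin (d + 1)) × Fin (n i))) = j₂ then
                -∑ k : ↥(ρ₂.erase j₂), (W₂ ↑k / W₂ j₂) •
                  extZero ({j₁, j₂}ᶜ) (fun v : ↥(({j₁, j₂}ᶜ :
                    Finset ((i : Fin (d + 1)) × Fin (n i)))) => f ↑v) ↑k
              else extZero ({j₁, j₂}ᶜ) (fun v : ↥(({j₁, j₂}ᶜ :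
                Finset ((i : Fin (d + 1)) × Fin (n i)))) => f ↑v) ↑i))
            = ∑ i : ↥(ρ₁.erase j₁), (W₁ ↑i / W₁ j₁) • f ↑i :=
          Finset.sum_congr rfl fun i _ => by rw [hterm i]
        rw [hs, hv1]
        exact solve_eq hj₁ρ hj₁W hW₁s
      · rw [hv2]
        exact hQ
      · exact hgf v hv1 hv2
    · push_neg at hA
      have hSsub : ρ₁ ∩ ρ₂ ⊆ ρ₁ := Finset.inter_subset_left
      have hW0' : ∀ v ∈ ρ₁, v ∉ ρ₁ ∩ ρ₂ → W₁ v = 0 := by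
        intro v hv hvS
        by_contra h
        exact hvS (Finset.mem_inter.2 ⟨hv, hA v hv h⟩)
      have hsum1 : (∑ v ∈ ρ₁ ∩ ρ₂, W₁ v) = 1 := by
        rw [Finset.sum_subset hSsub hW0', hW₁1]
      have hsum0 : (∑ v ∈ ρ₁ ∩ ρ₂, W₁ v • f v) = 0 := by
        rw [Finset.sum_subset hSsub (fun v hv hvS => by rw [hW0' v hv hvS, zero_smul]), hW₁s]
      obtain ⟨j, hjS, hjW⟩ := Finset.exists_ne_zero_of_sum_ne_zero
        (show (∑ v ∈ ρ₁ ∩ ρ₂, W₁ v) ≠ 0 by rw [hsum1]; exact one_ne_zero)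
      have hScard : (ρ₁ ∩ ρ₂).card < d := by
        have hss : ρ₁ ∩ ρ₂ ⊂ ρ₁ := by
          refine Finset.ssubset_iff_subset_ne.2 ⟨hSsub, fun h => hρne ?_⟩
          exact Finset.eq_of_subset_of_card_le (Finset.inter_eq_left.1 h)
            (le_of_eq (hc2.trans hc1.symm))
        calc (ρ₁ ∩ ρ₂).card < ρ₁.card := Finset.card_lt_card hss
          _ = d := hc1
      refine Set.mem_iUnion.2 ⟨Sum.inr (ρ₁ ∩ ρ₂, j), ?_⟩
      rw [Sum.elim_inr, if_pos ⟨hjS, hScard⟩]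
      refine ⟨⟨fun v => f ↑v, fun i => W₁ ↑i / W₁ j⟩, ?_⟩
      have hgf : ∀ w : ((i : Fin (d + 1)) × Fin (n i)), w ≠ j →
          extZero ({j}ᶜ) (fun v : ↥(({j}ᶜ : Finset ((i : Fin (d + 1)) × Fin (n i)))) =>
            f ↑v) w = f w := by
        intro w hw1
        have hw : w ∈ ({j}ᶜ : Finset ((i : Fin (d + 1)) × Fin (n i))) := by
          simp [Finset.mem_compl, hw1]
        simp only [extZero, dif_pos hw]
      funext v
      simp only [mapB]
      split_ifs with hv1
      · have hs : (∑ i : ↥((ρ₁ ∩ ρ₂).erase j), (W₁ ↑i / W₁ j) •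
            extZero ({j}ᶜ) (fun v : ↥(({j}ᶜ :
              Finset ((i : Fin (d + 1)) × Fin (n i)))) => f ↑v) ↑i)
            = ∑ i : ↥((ρ₁ ∩ ρ₂).erase j), (W₁ ↑i / W₁ j) • f ↑i :=
          Finset.sum_congr rfl fun i _ => by rw [hgf _ (Finset.mem_erase.1 i.2).1]
        rw [hs, hv1]
        exact solve_eq hjS hjW hsum0
      · exact hgf v hv1
  · rintro (⟨σ₁, σ₂, j₁, j₂⟩ | ⟨S, j⟩)
    · rw [Sum.elim_inl]
      split_ifs with h
      · obtain ⟨h1, h2, _, h4, h5, h6⟩ := h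
        refine le_trans (mapA_contDiff σ₁ σ₂ j₁ j₂).dimH_range_le ?_
        rw [finrank_domA]
        refine Nat.cast_le.2 ?_
        rw [Finset.card_compl, Finset.card_pair h4, hcardV, finrank_euclideanSpace,
          Fintype.card_fin, Finset.card_erase_of_mem h1, Finset.card_erase_of_mem h2, h5, h6]
        exact nat_boundA hN (h5 ▸ Finset.card_pos.2 ⟨j₁, h1⟩)
      · rw [dimH_empty]
        exact zero_le
    · rw [Sum.elim_inr]
      split_ifs with h
      · obtain ⟨h1, h2⟩ := h
        refine le_trans (mapB_contDiff S j).dimH_range_le ?_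
        rw [finrank_domB]
        refine Nat.cast_le.2 ?_
        rw [Finset.card_compl, Finset.card_singleton, hcardV, finrank_euclideanSpace,
          Fintype.card_fin, Finset.card_erase_of_mem h1]
        exact nat_boundB hN (Finset.card_pos.2 ⟨j, h1⟩) h2
      · rw [dimH_empty]
        exact zero_le
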